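/- In an entrenchment frame whose relation satisfies Bounded Cut, if ¬β ⪯ ¬α then Coh(α) ⊆ Coh(α∧β); dually, if ⪯ satisfies Bounded Right Monotonicity, then ¬β ⪯ ¬α implies Coh(α∧β) ⊆ Coh(α). -/
import Mathlib


/-- A propositional language: a type of sentences with boolean connectives. -/
structure Lang (L : Type) where
  or : L → L → L
  and : L → L → L
  not : L → L
  imp : L → L → L
  bot : L
  top : L

/-- A classical valuation of the language: respects all connectives. -/
def Lang.Val {L : Type} (S : Lang L) (v : L → Prop) : Prop :=
  (∀ a b, v (S.or a b) ↔ v a ∨ v b) ∧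
  (∀ a b, v (S.and a b) ↔ v a ∧ v b) ∧
  (∀ a, v (S.not a) ↔ ¬ v a) ∧
  (∀ a b, v (S.imp a b) ↔ (v a → v b)) ∧
  ¬ v S.bot ∧ v S.top

/-- Classical consequence from a set of premises. -/
def Lang.SEnt {L : Type} (S : Lang L) (X : Set L) (b : L) : Prop :=
  ∀ v, S.Val v → (∀ a ∈ X, v a) → v b

/-- Classical consequence between single sentences: α ⊢ β. -/
def Lang.ent {L : Type} (S : Lang L) (a b : L) : Prop := S.SEnt {a} b

/-- Deductive closure. -/
def Lang.Cn {L : Type} (S : Lang L) (X : Set L) : Set L := {b | S.SEnt X b}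

/-- Coh(α) = {β | ¬ (β ⪯ ¬α)}. -/
def Coh {L : Type} (S : Lang L) (pr : L → L → Prop) (a : L) : Set L :=
  {b | ¬ pr b (S.not a)}

/-- The base of α: deductively closed subsets of Coh(α). -/
def Base {L : Type} (S : Lang L) (pr : L → L → Prop) (a : L) : Set (Set L) :=
  {U | U = S.Cn U ∧ U ⊆ Coh S pr a}

/-- The maximal base of α. -/
def MaxBase {L : Type} (S : Lang L) (pr : L → L → Prop) (a : L) : Set (Set L) :=
  {U | U ∈ Base S pr a ∧ ∀ U', U' = S.Cn U' → U ⊂ U' → U' ∉ Base S pr a}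

/-- Maxiconsistent inference: α |~⪯ β. -/
def MInf {L : Type} (S : Lang L) (pr : L → L → Prop) (a b : L) : Prop :=
  ∀ U ∈ MaxBase S pr a, b ∈ S.Cn (U ∪ {a})

/-- Bounded Cut: ¬β ⪯ ¬α implies Coh(α) ⊆ Coh(α∧β); Bounded Right Monotonicity:
¬β ⪯ ¬α implies Coh(α∧β) ⊆ Coh(α). -/
theorem stmt15 {L : Type} (S : Lang L) (pr : L → L → Prop)
    (hrefl : ∀ a, pr a a)
    (hlm : ∀ a b c, S.ent a b → pr b c → pr a c)
    (hle : ∀ a b c, S.ent a b → S.ent b a → (pr c a ↔ pr c b)) :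
    ((∀ a b c, pr c (S.or a b) → pr b a → pr c a) →
      ∀ a b, pr (S.not b) (S.not a) → Coh S pr a ⊆ Coh S pr (S.and a b)) ∧
    ((∀ a b c, pr c a → pr b a → pr c (S.or a b)) →
      ∀ a b, pr (S.not b) (S.not a) → Coh S pr (S.and a b) ⊆ Coh S pr a) := by
  have dm1 : ∀ a b : L, S.ent (S.not (S.and a b)) (S.or (S.not a) (S.not b)) := by
    intro a b v hv hX
    obtain ⟨hor, hand, hnot, _⟩ := hv
    have h := hX _ rfl
    rw [hnot, hand] at h
    rw [hor, hnot, hnot]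
    tauto
  have dm2 : ∀ a b : L, S.ent (S.or (S.not a) (S.not b)) (S.not (S.and a b)) := by
    intro a b v hv hX
    obtain ⟨hor, hand, hnot, _⟩ := hv
    have h := hX _ rfl
    rw [hor, hnot, hnot] at h
    rw [hnot, hand]
    tauto
  constructor
  · intro bc a b hba c hc hcon
    apply hc
    have := (hle _ _ c (dm1 a b) (dm2 a b)).mp hcon
    exact bc _ _ _ this hba
  · intro brm a b hba c hc hcon
    apply hc
    exact (hle _ _ c (dm1 a b) (dm2 a b)).mpr (brm _ _ _ hcon hba)
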